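/- Let n = 2k+1 ≥ 3, Q = (1/n)eeᵀ - I, c = 0, x̂ = (1/2)e, and X̂ = (1/4)(1 + 1/(n-1)) I + (1/4)(1 - 1/(n-1)) eeᵀ. Then (x̂, X̂) belongs to the SDP-RLT feasible set 𝓕_RS, and (1/2)⟨Q, X̂⟩ + cᵀx̂ = -n/8 < (1/2)(k²/n - k) = ℓ*. Hence the SDP-RLT relaxation of this instance is inexact. -/

import Mathlib

open Matrix Finset

/-- Trace inner product ⟨A, B⟩ = trace(AᵀB). -/
noncomputable def ip {n : ℕ} (A B : Matrix (Fin n) (Fin n) ℝ) : ℝ :=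
  ∑ i, ∑ j, A i j * B i j

/-- The SDP-RLT feasible set. -/
def memFRS {n : ℕ} (x : Fin n → ℝ) (X : Matrix (Fin n) (Fin n) ℝ) : Prop :=
  X.IsSymm ∧ (∀ i, 0 ≤ x i ∧ x i ≤ 1) ∧
    (∀ i j, max (x i + x j - 1) 0 ≤ X i j ∧ X i j ≤ min (x i) (x j)) ∧
    (X - Matrix.vecMulVec x x).PosSemidef

set_option maxHeartbeats 1000000 in
theorem stmt_15 (k : ℕ) (hk : 1 ≤ k) (n : ℕ) (hn : n = 2 * k + 1)
    (Q : Matrix (Fin n) (Fin n) ℝ)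
    (hQ : Q = ((n : ℝ)⁻¹) • Matrix.vecMulVec 1 1 - 1)
    (xh : Fin n → ℝ) (hxh : xh = fun _ => (1 : ℝ)/2)
    (Xh : Matrix (Fin n) (Fin n) ℝ)
    (hXh : Xh = ((1/4) * (1 + 1/((n : ℝ) - 1))) • (1 : Matrix (Fin n) (Fin n) ℝ) +
      ((1/4) * (1 - 1/((n : ℝ) - 1))) • Matrix.vecMulVec 1 1) :
    memFRS xh Xh ∧
    (1/2) * ip Q Xh = -(n : ℝ)/8 ∧
    -(n : ℝ)/8 < (1/2) * ((k : ℝ)^2 / n - k) := by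
  have hkR : (1:ℝ) ≤ (k:ℝ) := by exact_mod_cast hk
  have hnR : (n:ℝ) = 2 * (k:ℝ) + 1 := by rw [hn]; push_cast; ring
  have hN : (3:ℝ) ≤ (n:ℝ) := by rw [hnR]; linarith
  have hd : (0:ℝ) < (n:ℝ) - 1 := by linarith
  have hd' : ((n:ℝ) - 1) ≠ 0 := ne_of_gt hd
  have hn0 : (n:ℝ) ≠ 0 := by positivity
  set a : ℝ := (1/4) * (1 + 1/((n : ℝ) - 1)) with ha
  set b : ℝ := (1/4) * (1 - 1/((n : ℝ) - 1)) with hb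
  have hinv : 1/((n:ℝ) - 1) ≤ 1/2 := by
    rw [div_le_div_iff₀ hd (by norm_num)]; linarith
  have hinv0 : 0 < 1/((n:ℝ) - 1) := by positivity
  have hab : a + b = 1/2 := by rw [ha, hb]; ring
  have hb0 : 0 ≤ b := by rw [hb]; nlinarith
  have hb2 : b ≤ 1/2 := by rw [hb]; nlinarith
  have hXe : ∀ i j, Xh i j = if i = j then a + b else b := by
    intro i j
    rw [hXh]
    simp only [Matrix.add_apply, Matrix.smul_apply, Matrix.one_apply,
      Matrix.vecMulVec_apply, Pi.one_apply, smul_eq_mul]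
    split <;> ring
  have hsum : ∀ (d o : ℝ) (i : Fin n), (∑ j : Fin n, if i = j then d else o)
      = d + ((n:ℝ) - 1) * o := by
    intro d o i
    have : ∀ j : Fin n, (if i = j then d else o) = (if i = j then d - o else 0) + o := by
      intro j; split <;> ring
    simp only [this]
    rw [Finset.sum_add_distrib, Finset.sum_ite_eq, Finset.sum_const]
    simp [Fintype.card_fin]
    ring
  refine ⟨⟨?_, ?_, ?_, ?_⟩, ?_, ?_⟩
  · -- IsSymm
    rw [Matrix.IsSymm]
    ext i j
    rw [Matrix.transpose_apply, hXe, hXe]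
    simp [eq_comm]
  · intro i; rw [hxh]; norm_num
  · intro i j
    rw [hxh, hXe]
    refine ⟨max_le ?_ ?_, le_min ?_ ?_⟩ <;> split <;> norm_num <;> linarith
  · -- PosSemidef
    have hM : ∀ i j, (Xh - Matrix.vecMulVec xh xh) i j
        = (if i = j then a else 0) + (b - 1/4) := by
      intro i j
      rw [Matrix.sub_apply, hXe, Matrix.vecMulVec_apply, hxh]
      split <;> norm_num <;> ring
    rw [Matrix.posSemidef_iff_dotProduct_mulVec]
    constructor
    · rw [Matrix.IsHermitian]
      ext i j
      rw [Matrix.conjTranspose_apply, hM, hM]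
      simp [eq_comm]
    · intro x
      have hmv : ∀ i, ((Xh - Matrix.vecMulVec xh xh) *ᵥ x) i
          = a * x i + (b - 1/4) * ∑ j, x j := by
        intro i
        rw [Matrix.mulVec, dotProduct]
        simp only [hM]
        have : ∀ j : Fin n, ((if i = j then a else 0) + (b - 1/4)) * x j
            = (if i = j then a * x j else 0) + (b - 1/4) * x j := by
          intro j; split <;> ring
        simp only [this]
        rw [Finset.sum_add_distrib, Finset.sum_ite_eq, Finset.mul_sum]
        simp
      have hstar : (star x : Fin n → ℝ) = x := by
        ext i; simp
      rw [hstar, dotProduct]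
      simp only [hmv]
      have hexp : ∑ i, x i * (a * x i + (b - 1/4) * ∑ j, x j)
          = a * (∑ i, x i ^ 2) + (b - 1/4) * (∑ i, x i) ^ 2 := by
        calc ∑ i, x i * (a * x i + (b - 1/4) * ∑ j, x j)
            = ∑ i, (a * x i ^ 2 + ((b - 1/4) * ∑ j, x j) * x i) :=
              Finset.sum_congr rfl (fun i _ => by ring)
          _ = a * (∑ i, x i ^ 2) + ((b - 1/4) * ∑ j, x j) * ∑ i, x i := by
              rw [Finset.sum_add_distrib, ← Finset.mul_sum, ← Finset.mul_sum]
          _ = a * (∑ i, x i ^ 2) + (b - 1/4) * (∑ i, x i) ^ 2 := by ring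
      rw [hexp]
      set u : ℝ := 1/(4 * ((n:ℝ) - 1)) with hu
      have hu0 : 0 < u := by positivity
      have hau : a = (n:ℝ) * u := by rw [ha, hu]; field_simp; ring
      have hbu : b - 1/4 = -u := by rw [hb, hu]; field_simp; ring
      have hC : (∑ i, x i) ^ 2 ≤ (n:ℝ) * ∑ i, x i ^ 2 := by
        have := sq_sum_le_card_mul_sum_sq (s := (Finset.univ : Finset (Fin n))) (f := x)
        simpa [Fintype.card_fin] using this
      have := mul_nonneg hu0.le (sub_nonneg.2 hC)
      rw [hau, hbu]
      nlinarith [this]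
  · -- ip value
    have hQe : ∀ i j : Fin n, Q i j = if i = j then (n:ℝ)⁻¹ - 1 else (n:ℝ)⁻¹ := by
      intro i j
      rw [hQ]
      simp only [Matrix.sub_apply, Matrix.smul_apply, Matrix.vecMulVec_apply,
        Pi.one_apply, Matrix.one_apply, smul_eq_mul]
      split <;> ring
    have hprod : ∀ i j : Fin n, Q i j * Xh i j
        = if i = j then ((n:ℝ)⁻¹ - 1) * (a + b) else (n:ℝ)⁻¹ * b := by
      intro i j
      rw [hQe, hXe]
      split <;> ring
    rw [ip]
    simp only [hprod, hsum]
    rw [Finset.sum_const]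
    simp only [Finset.card_univ, Fintype.card_fin, nsmul_eq_mul]
    rw [ha, hb]
    field_simp
    ring
  · -- strict inequality
    have h2 : (1/2) * ((k:ℝ)^2 / n - k) = ((k:ℝ)^2 - k * n) / (2 * n) := by
      field_simp
    rw [h2, div_lt_div_iff₀ (by norm_num) (by positivity)]
    nlinarith [hnR, sq_nonneg ((k:ℝ))]
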